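/- Let v_0, v_1, …, v_{n-1} with n ≥ 4 be points in the plane in convex position and in general position (no three collinear), listed in convex-position order, and let H be a set of chords of the convex polygon (segments v_i v_j between two vertices that are not consecutive in the cyclic order) such that no two chords of H cross. Then there exist two vertices v_i and v_j that are not consecutive in the cyclic order and that are incident to no chord of H. -/

import Mathlib

open scoped Classical

noncomputable section

abbrev Pt : Type := ℝ × ℝ

/-- Two segments cross: they meet in a point that is not a common endpoint. -/
def SegCross (a b c d : Pt) : Prop :=
  ∃ x : Pt, x ∈ segment ℝ a b ∧ x ∈ segment ℝ c d ∧
    ¬ ((x = a ∨ x = b) ∧ (x = c ∨ x = d))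

/-- Crossing of two (undirected) straight-line edges. -/
def EdgeCross (e f : Sym2 Pt) : Prop :=
  ∃ a b c d : Pt, e = s(a, b) ∧ f = s(c, d) ∧ SegCross a b c d

/-- The closed segment represented by an undirected edge. -/
def SegOf (e : Sym2 Pt) : Set Pt :=
  Sym2.lift ⟨fun a b => segment ℝ a b, fun a b => segment_symm ℝ a b⟩ e

/-- General position: no three of the points are collinear. -/
def GenPos (V : Finset Pt) : Prop :=
  ∀ a ∈ V, ∀ b ∈ V, ∀ c ∈ V, a ≠ b → a ≠ c → b ≠ c →
    ¬ Collinear ℝ ({a, b, c} : Set Pt)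

/-- A plane geometric graph. -/
structure GeomGraph where
  V : Finset Pt
  E : Finset (Sym2 Pt)
  genpos : GenPos V
  edges_sub : ∀ e ∈ E, ∀ v ∈ e, v ∈ V
  edges_ne : ∀ e ∈ E, ¬ e.IsDiag
  plane : ∀ e ∈ E, ∀ f ∈ E, e ≠ f → ¬ EdgeCross e f

/-- Edges of the visibility graph of `G`. -/
def VisEdge (G : GeomGraph) (e : Sym2 Pt) : Prop :=
  ∃ u v : Pt, u ∈ G.V ∧ v ∈ G.V ∧ u ≠ v ∧ e = s(u, v) ∧ e ∉ G.E ∧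
    ∀ f ∈ G.E, ¬ EdgeCross e f

/-- Degree of a point in a finite set of undirected edges. -/
def degIn (H : Finset (Sym2 Pt)) (v : Pt) : ℕ :=
  (H.filter fun e => v ∈ e).card

/-- `H` is a happy set for `(G, R)`. -/
def IsHappySet (G : GeomGraph) (R : Finset Pt) (H : Finset (Sym2 Pt)) : Prop :=
  (∀ e ∈ H, VisEdge G e) ∧
  (∀ e ∈ H, ∀ f ∈ H, e ≠ f → ¬ EdgeCross e f) ∧
  (∀ v : Pt, Odd (degIn H v) ↔ v ∈ R)

def HasHappySet (G : GeomGraph) (R : Finset Pt) : Prop :=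
  ∃ H : Finset (Sym2 Pt), IsHappySet G R H

/-- The points of `V` are in convex position. -/
def ConvexPos (V : Finset Pt) : Prop :=
  ∀ v ∈ V, v ∉ convexHull ℝ ((V : Set Pt) \ {v})

/-- The segment `ab` lies on the boundary of the convex hull of `V`. -/
def OnHullFrontier (V : Finset Pt) (a b : Pt) : Prop :=
  segment ℝ a b ⊆ frontier (convexHull ℝ (V : Set Pt))

namespace Stmt8Aux

def det2 (u w : Pt) : ℝ := u.1 * w.2 - u.2 * w.1
def D3 (p q r : Pt) : ℝ := det2 (q - p) (r - p)

lemma D3_def (p q r : Pt) : D3 p q r = (q.1 - p.1) * (r.2 - p.2) - (q.2 - p.2) * (r.1 - p.1) := by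
  simp [D3, det2]

lemma D3_cycle (p q r : Pt) : D3 p q r = D3 q r p := by
  simp only [D3_def]; ring

lemma D3_swap (p q r : Pt) : D3 p q r = - D3 p r q := by
  simp only [D3_def]; ring

lemma smul_vadd_pt (r : ℝ) (u p : Pt) : r • u +ᵥ p = (r * u.1 + p.1, r * u.2 + p.2) := by
  apply Prod.ext <;> simp [Prod.smul_def]

lemma collinear_of_D3 {p q r : Pt} (h : D3 p q r = 0) :
    Collinear ℝ ({p, q, r} : Set Pt) := by
  rcases eq_or_ne q p with rfl | hqp
  · rw [Set.insert_comm, Set.insert_idem]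
    exact collinear_pair ℝ q r
  · rw [collinear_iff_of_mem (Set.mem_insert p {q, r})]
    refine ⟨q - p, ?_⟩
    intro x hx
    rw [D3_def] at h
    have hsub1 : (q - p).1 = q.1 - p.1 := rfl
    have hsub2 : (q - p).2 = q.2 - p.2 := rfl
    rcases hx with rfl | rfl | rfl
    · exact ⟨0, by simp⟩
    · exact ⟨1, by simp⟩
    · rcases eq_or_ne (q.1 - p.1) 0 with h1 | h1
      · have h2 : q.2 - p.2 ≠ 0 := by
          intro h2; apply hqp
          apply Prod.ext
          · linarith
          · linarith
        refine ⟨(x.2 - p.2) / (q.2 - p.2), ?_⟩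
        rw [smul_vadd_pt, hsub1, hsub2]
        have hx1 : (x.1 - p.1) * (q.2 - p.2) = 0 := by linear_combination -h + (x.2 - p.2) * h1
        have hx1' : x.1 = p.1 := by
          rcases mul_eq_zero.mp hx1 with h' | h'
          · linarith
          · exact absurd h' h2
        apply Prod.ext
        · simp [h1, hx1']
        · field_simp; ring
      · refine ⟨(x.1 - p.1) / (q.1 - p.1), ?_⟩
        rw [smul_vadd_pt, hsub1, hsub2]
        apply Prod.ext
        · field_simp; ring
        · field_simp
          nlinarith

lemma interior_hull_nonempty (n : ℕ) (hn : 3 ≤ n) (v : ℕ → Pt)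
    (hinj : ∀ i < n, ∀ j < n, v i = v j → i = j)
    (hgp : GenPos ((Finset.range n).image v)) :
    (interior (convexHull ℝ (((Finset.range n).image v : Finset Pt) : Set Pt))).Nonempty := by
  set V := (Finset.range n).image v with hV
  have hmem : ∀ i, i < n → v i ∈ V := fun i hi =>
    Finset.mem_image.mpr ⟨i, Finset.mem_range.mpr hi, rfl⟩
  have hne : ∀ i, i < n → ∀ j, j < n → i ≠ j → v i ≠ v j := fun i hi j hj hij h =>
    hij (hinj i hi j hj h)
  have hncol : ¬ Collinear ℝ ({v 0, v 1, v 2} : Set Pt) :=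
    hgp (v 0) (hmem 0 (by omega)) (v 1) (hmem 1 (by omega)) (v 2) (hmem 2 (by omega))
      (hne 0 (by omega) 1 (by omega) (by omega))
      (hne 0 (by omega) 2 (by omega) (by omega))
      (hne 1 (by omega) 2 (by omega) (by omega))
  have hai : AffineIndependent ℝ ![v 0, v 1, v 2] := by
    rw [affineIndependent_iff_not_collinear]
    convert hncol using 2
    simp [Matrix.range_cons, Matrix.range_empty]
    ext x; simp; tauto
  have htop : affineSpan ℝ (Set.range ![v 0, v 1, v 2]) = ⊤ := by
    rw [hai.affineSpan_eq_top_iff_card_eq_finrank_add_one]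
    simp
  have htopV : affineSpan ℝ (V : Set Pt) = ⊤ := by
    apply top_le_iff.mp
    rw [← htop]
    apply affineSpan_mono
    intro x hx
    rcases hx with ⟨i, rfl⟩
    fin_cases i <;>
      [exact hmem 0 (by omega); exact hmem 1 (by omega); exact hmem 2 (by omega)]
  rw [(convex_convexHull ℝ _).interior_nonempty_iff_affineSpan_eq_top,
    affineSpan_convexHull]
  exact htopV

lemma clm_eval (f : Pt →L[ℝ] ℝ) (p : Pt) :
    f p = f (1, 0) * p.1 + f (0, 1) * p.2 := by
  have : p = p.1 • ((1 : ℝ), (0 : ℝ)) + p.2 • ((0 : ℝ), (1 : ℝ)) := by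
    apply Prod.ext <;> simp
  calc f p = f (p.1 • ((1:ℝ),(0:ℝ)) + p.2 • ((0:ℝ),(1:ℝ))) := by rw [← this]
    _ = p.1 * f (1, 0) + p.2 * f (0, 1) := by
        rw [map_add, map_smul, map_smul]; simp [smul_eq_mul]
    _ = f (1, 0) * p.1 + f (0, 1) * p.2 := by ring

lemma succ_mod_ne {n i : ℕ} (hn : 2 ≤ n) (hi : i < n) : i ≠ (i + 1) % n := by
  rcases Nat.lt_or_ge (i + 1) n with h | h
  · rw [Nat.mod_eq_of_lt h]; omega
  · have h' : i + 1 = n := by omega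
    rw [h', Nat.mod_self]; omega

lemma edge_support (n : ℕ) (hn : 3 ≤ n) (v : ℕ → Pt)
    (hinj : ∀ i < n, ∀ j < n, v i = v j → i = j)
    (hgp : GenPos ((Finset.range n).image v))
    (horder : ∀ i < n,
      OnHullFrontier ((Finset.range n).image v) (v i) (v ((i + 1) % n)))
    (i : ℕ) (hi : i < n) :
    ∃ s : ℝ, s ≠ 0 ∧ ∀ j < n, j ≠ i → j ≠ (i + 1) % n →
      0 < s * D3 (v i) (v ((i + 1) % n)) (v j) := by
  set V := (Finset.range n).image v with hV
  set K : Set Pt := convexHull ℝ (V : Set Pt) with hK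
  have hmem : ∀ k, k < n → v k ∈ V := fun k hk =>
    Finset.mem_image.mpr ⟨k, Finset.mem_range.mpr hk, rfl⟩
  have hmemK : ∀ k, k < n → v k ∈ K := fun k hk => subset_convexHull ℝ _ (hmem k hk)
  set i' := (i + 1) % n with hi'
  have hi'n : i' < n := Nat.mod_lt _ (by omega)
  have hii' : i ≠ i' := succ_mod_ne (by omega) hi
  set a := v i with ha
  set b := v i' with hb
  have hab : a ≠ b := fun h => hii' (hinj i hi i' hi'n h)
  -- midpoint on frontier
  set x₀ : Pt := midpoint ℝ a b with hx₀
  have hx₀f : x₀ ∈ frontier K := horder i hi (midpoint_mem_segment a b)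
  have hx₀K : x₀ ∈ K := by
    have : x₀ ∈ closure K := frontier_subset_closure hx₀f
    rwa [IsClosed.closure_eq] at this
    exact (Set.Finite.isCompact_convexHull (𝕜 := ℝ) (V.finite_toSet)).isClosed
  have hx₀ni : x₀ ∉ interior K := hx₀f.2
  obtain ⟨w₀, hw₀⟩ := interior_hull_nonempty n hn v hinj hgp
  obtain ⟨f, hf⟩ := geometric_hahn_banach_open_point
    ((convex_convexHull ℝ (V : Set Pt)).interior) isOpen_interior hx₀ni
  have hfw₀ : f w₀ < f x₀ := hf w₀ hw₀
  -- every point of the hull is ≤ f x₀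
  have hle : ∀ y ∈ K, f y ≤ f x₀ := by
    intro y hy
    by_contra hlt
    push_neg at hlt
    set t : ℝ := (f x₀ - f w₀) / (f y - f w₀) with hT
    have hd : 0 < f y - f w₀ := by linarith
    have ht0 : 0 < t := by apply div_pos <;> linarith
    have ht1 : t < 1 := by rw [div_lt_one hd]; linarith
    have hz : (1 - t) • w₀ + t • y ∈ interior K := by
      apply (convex_convexHull ℝ (V : Set Pt)).openSegment_interior_self_subset_interior hw₀ hy
      exact ⟨1 - t, t, by linarith, ht0, by ring, rfl⟩
    have hzval : f ((1 - t) • w₀ + t • y) = f x₀ := by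
      rw [map_add, map_smul, map_smul, smul_eq_mul, smul_eq_mul, hT]
      field_simp
      ring
    have := hf _ hz
    rw [hzval] at this
    exact lt_irrefl _ this
  have hfa : f a ≤ f x₀ := hle a (hmemK i hi)
  have hfb : f b ≤ f x₀ := hle b (hmemK i' hi'n)
  have hmid : f x₀ = (f a + f b) / 2 := by
    rw [hx₀, midpoint_eq_smul_add, map_smul, map_add, smul_eq_mul, invOf_eq_inv]; ring
  have hfa' : f a = f x₀ := by linarith
  have hfb' : f b = f x₀ := by linarith
  set fa := f (1, 0) with hfa0
  set fb := f (0, 1) with hfb0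
  have heval : ∀ p : Pt, f p = fa * p.1 + fb * p.2 := clm_eval f
  have hfnz : ¬ (fa = 0 ∧ fb = 0) := by
    rintro ⟨h1, h2⟩
    have : ∀ p : Pt, f p = 0 := fun p => by rw [heval p, h1, h2]; ring
    rw [this w₀, this x₀] at hfw₀
    exact lt_irrefl _ hfw₀
  -- e = b - a is in the kernel direction
  have he : fa * (b.1 - a.1) + fb * (b.2 - a.2) = 0 := by
    have := hfb'.trans hfa'.symm
    rw [heval a, heval b] at this
    linarith
  -- choose t with b - a = t • (-fb, fa)
  obtain ⟨s, hs1, hs2⟩ : ∃ s : ℝ, b.1 - a.1 = -(s * fb) ∧ b.2 - a.2 = s * fa := by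
    rcases eq_or_ne fa 0 with h0 | h0
    · have hfbne : fb ≠ 0 := fun h => hfnz ⟨h0, h⟩
      refine ⟨-(b.1 - a.1) / fb, by field_simp, ?_⟩
      rw [h0]
      have : fb * (b.2 - a.2) = 0 := by rw [h0] at he; linarith
      rcases mul_eq_zero.mp this with h' | h'
      · exact absurd h' hfbne
      · rw [h']; ring
    · refine ⟨(b.2 - a.2) / fa, ?_, by field_simp⟩
      field_simp
      linarith
  have hsne : s ≠ 0 := by
    intro h
    rw [h] at hs1 hs2
    apply hab
    apply Prod.ext
    · simp at hs1; linarith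
    · simp at hs2; linarith
  refine ⟨s, hsne, ?_⟩
  intro j hj hji hji'
  have hjmem : v j ∈ K := hmemK j hj
  have hfj : f (v j) ≤ f x₀ := hle _ hjmem
  have hfjs : f (v j) < f x₀ := by
    rcases lt_or_eq_of_le hfj with h | h
    · exact h
    · exfalso
      have hcol : Collinear ℝ ({a, b, v j} : Set Pt) := by
        apply collinear_of_D3
        rw [D3_def]
        have h1 : fa * (v j).1 + fb * (v j).2 = fa * a.1 + fb * a.2 := by
          rw [← heval, ← heval, h, hfa']
        rcases eq_or_ne fa 0 with h0 | h0
        · have hfbne : fb ≠ 0 := fun hh => hfnz ⟨h0, hh⟩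
          rw [h0] at he h1
          have e1 : b.2 - a.2 = 0 := by
            have h' : fb * (b.2 - a.2) = 0 := by linear_combination he
            rcases mul_eq_zero.mp h' with h'' | h''
            · exact absurd h'' hfbne
            · exact h''
          have e2 : (v j).2 - a.2 = 0 := by
            have h' : fb * ((v j).2 - a.2) = 0 := by linear_combination h1
            rcases mul_eq_zero.mp h' with h'' | h''
            · exact absurd h'' hfbne
            · exact h''
          rw [e1, e2]; ring
        · -- fa ≠ 0 : multiply out
          have e1 : b.1 - a.1 = -(fb * (b.2 - a.2)) / fa := by field_simp; linarith
          have e2 : (v j).1 - a.1 = -(fb * ((v j).2 - a.2)) / fa := by field_simp; linarith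
          rw [e1, e2]; field_simp; ring
      exact hgp a (hmem i hi) b (hmem i' hi'n) (v j) (hmem j hj) hab
        (fun hh => hji (hinj i hi j hj hh).symm)
        (fun hh => hji' (hinj i' hi'n j hj hh).symm) hcol
  have hkey : s * D3 a b (v j) = s^2 * (f x₀ - f (v j)) := by
    rw [D3_def, hs1, hs2, heval (v j), hfa'.symm, heval a]
    ring
  rw [hkey]
  have hs2pos : 0 < s^2 := lt_of_le_of_ne (sq_nonneg s) (Ne.symm (pow_ne_zero 2 hsne))
  exact mul_pos hs2pos (by linarith)

lemma mod_small {i k n : ℕ} (h1 : i < n) (h2 : k ≤ n) :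
    (i + k) % n = if i + k < n then i + k else i + k - n := by
  split_ifs with h
  · exact Nat.mod_eq_of_lt h
  · rw [Nat.mod_eq_sub_mod (by omega)]
    exact Nat.mod_eq_of_lt (by omega)

lemma sign_transfer {s t d X : ℝ} (h1 : 0 < s * d) (h2 : 0 < t * d) (h3 : 0 < t * X) :
    0 < s * X := by
  nlinarith [mul_pos h1 h3, h2]

lemma plucker {s : ℝ} {e u w z : Pt}
    (h1 : 0 < s * det2 e u) (h2 : 0 < s * det2 e w) (h3 : 0 < s * det2 e z)
    (h4 : 0 < s * det2 u w) (h5 : 0 < s * det2 w z) : 0 < s * det2 u z := by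
  have hid : (s * det2 u z) * (s * det2 e w)
      = (s * det2 u w) * (s * det2 e z) + (s * det2 w z) * (s * det2 e u) := by
    simp only [det2]; ring
  nlinarith [mul_pos h4 h3, mul_pos h5 h1, h2]

lemma global_support (n : ℕ) (hn : 3 ≤ n) (v : ℕ → Pt)
    (hinj : ∀ i < n, ∀ j < n, v i = v j → i = j)
    (hgp : GenPos ((Finset.range n).image v))
    (horder : ∀ i < n,
      OnHullFrontier ((Finset.range n).image v) (v i) (v ((i + 1) % n))) :
    ∃ s : ℝ, s ≠ 0 ∧ ∀ i < n, ∀ j < n, j ≠ i → j ≠ (i + 1) % n →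
      0 < s * D3 (v i) (v ((i + 1) % n)) (v j) := by
  obtain ⟨s, hs0, hs⟩ := edge_support n hn v hinj hgp horder 0 (by omega)
  refine ⟨s, hs0, ?_⟩
  intro i
  induction i with
  | zero => intro _ j hj h1 h2; exact hs j hj h1 h2
  | succ i ih =>
    intro hi1 j hj hji hji'
    have hi : i < n := by omega
    obtain ⟨t, ht0, ht⟩ := edge_support n hn v hinj hgp horder (i + 1) hi1
    have hmod1 : (i + 1) % n = i + 1 := Nat.mod_eq_of_lt hi1
    have hmod2lt : (i + 2) % n < n := Nat.mod_lt _ (by omega)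
    have hm2 : (i + 2) % n = if i + 2 < n then i + 2 else i + 2 - n :=
      mod_small hi (by omega)
    have hne1 : (i + 2) % n ≠ i := by rw [hm2]; split_ifs <;> omega
    have hne2 : (i + 2) % n ≠ i + 1 := by rw [hm2]; split_ifs <;> omega
    -- d = D3 (v i) (v (i+1)) (v ((i+2)%n))
    have hd : 0 < s * D3 (v i) (v (i + 1)) (v ((i + 2) % n)) := by
      have := ih hi ((i + 2) % n) hmod2lt hne1 (by rw [hmod1]; exact hne2)
      rwa [hmod1] at this
    -- edge (i+1) at j = i : gives t * d > 0 after cycling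
    have hia : i ≠ i + 1 := by omega
    have hib : i ≠ (i + 2) % n := Ne.symm hne1
    have htd : 0 < t * D3 (v i) (v (i + 1)) (v ((i + 2) % n)) := by
      have h := ht i hi hia (by
        have : (i + 1 + 1) % n = (i + 2) % n := by ring_nf
        rw [this]; exact hib)
      have hcyc : D3 (v (i + 1)) (v ((i + 1 + 1) % n)) (v i)
          = D3 (v i) (v (i + 1)) (v ((i + 2) % n)) := by
        have h22 : (i + 1 + 1) % n = (i + 2) % n := by ring_nf
        rw [h22, ← D3_cycle, ← D3_cycle]
      rwa [hcyc] at h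
    have htx : 0 < t * D3 (v (i + 1)) (v ((i + 1 + 1) % n)) (v j) := ht j hj hji hji'
    exact sign_transfer hd htd htx

lemma triple_orient (n : ℕ) (hn : 3 ≤ n) (v : ℕ → Pt)
    (hinj : ∀ i < n, ∀ j < n, v i = v j → i = j)
    (hgp : GenPos ((Finset.range n).image v))
    (horder : ∀ i < n,
      OnHullFrontier ((Finset.range n).image v) (v i) (v ((i + 1) % n))) :
    ∃ s : ℝ, s ≠ 0 ∧ ∀ a b c : ℕ, a < b → b < c → c < n →
      0 < s * D3 (v a) (v b) (v c) := by
  obtain ⟨s, hs0, hs⟩ := global_support n hn v hinj hgp horder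
  refine ⟨s, hs0, ?_⟩
  intro a b c
  -- edge helper at an index p with p + 1 < n
  have hedge : ∀ p q : ℕ, p + 1 < n → q < n → q ≠ p → q ≠ p + 1 →
      0 < s * D3 (v p) (v (p + 1)) (v q) := by
    intro p q hp hq h1 h2
    have hmod : (p + 1) % n = p + 1 := Nat.mod_eq_of_lt hp
    have := hs p (by omega) q hq h1 (by rw [hmod]; exact h2)
    rwa [hmod] at this
  induction c with
  | zero => intro _ h _; omega
  | succ c ihc =>
    intro hab hbc hc1
    have hc : c < n := by omega
    rcases Nat.lt_or_ge b c with hblt | hbge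
    · -- b < c
      have hvc : 0 < s * D3 (v a) (v c) (v (c + 1)) := by
        rw [D3_cycle]
        exact hedge c a hc1 (by omega) (by omega) (by omega)
      rcases eq_or_lt_of_le (by omega : a + 1 ≤ b) with hb1 | hb1
      · rw [← hb1]
        exact hedge a (c + 1) (by omega) hc1 (by omega) (by omega)
      · -- a + 1 < b : use plucker with halfplane at a
        have h4 : 0 < s * D3 (v a) (v b) (v c) := ihc hab hblt hc
        have he_b : 0 < s * D3 (v a) (v (a + 1)) (v b) :=
          hedge a b (by omega) (by omega) (by omega) (by omega)
        have he_c : 0 < s * D3 (v a) (v (a + 1)) (v c) :=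
          hedge a c (by omega) hc (by omega) (by omega)
        have he_c1 : 0 < s * D3 (v a) (v (a + 1)) (v (c + 1)) :=
          hedge a (c + 1) (by omega) hc1 (by omega) (by omega)
        exact plucker he_b he_c he_c1 h4 hvc
    · -- b = c
      have hbc' : b = c := by omega
      subst hbc'
      rw [D3_cycle]
      exact hedge b a hc1 (by omega) (by omega) (by omega)

lemma eq_of_wbtw_extreme {V : Finset Pt} {a b x : Pt}
    (hconv : ConvexPos V) (ha : a ∈ V) (hb : b ∈ V) (hab : b ≠ a)
    (hx : x ∈ convexHull ℝ (V : Set Pt)) (hw : Wbtw ℝ x a b) : x = a := by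
  rw [← mem_segment_iff_wbtw] at hw
  obtain ⟨u, w, hu, hw', huw, heq⟩ := hw
  rcases eq_or_lt_of_le hu with hu0 | hu0
  · exfalso; apply hab
    have hw1 : w = 1 := by linarith
    rw [← hu0, hw1] at heq; simpa using heq
  have hVeq : (V : Set Pt) = insert a ((V : Set Pt) \ {a}) := by
    ext y; by_cases h : y = a <;> simp [h, ha]
  rw [hVeq, convexHull_insert ⟨b, by simp [hb, hab]⟩, mem_convexJoin] at hx
  obtain ⟨a', ha', y, hy, hxseg⟩ := hx
  rw [Set.mem_singleton_iff] at ha'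
  rw [ha'] at hxseg
  obtain ⟨μ, ν, hμ, hν, hμν, heq2⟩ := hxseg
  have h1 := congrArg Prod.fst heq
  have h2 := congrArg Prod.snd heq
  have h3 := congrArg Prod.fst heq2
  have h4 := congrArg Prod.snd heq2
  simp only [Prod.fst_add, Prod.snd_add, Prod.smul_fst, Prod.smul_snd, smul_eq_mul] at h1 h2 h3 h4
  by_cases hcase : u * μ = 1
  · -- u = μ = 1, so x = a
    have hu1 : u = 1 := by nlinarith
    have hμ1 : μ = 1 := by nlinarith
    have hν0 : ν = 0 := by linarith
    rw [hμ1, hν0] at heq2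
    simpa using heq2.symm
  · exfalso
    have hlt : u * μ < 1 := lt_of_le_of_ne (by nlinarith) hcase
    set c := 1 - u * μ with hc
    have hcpos : 0 < c := by linarith
    have hbmem : b ∈ convexHull ℝ ((V : Set Pt) \ {a}) :=
      subset_convexHull ℝ _ (by simp [hb, hab])
    have haeq : a = (c⁻¹ * (u * ν)) • y + (c⁻¹ * w) • b := by
      apply Prod.ext <;>
          simp only [Prod.fst_add, Prod.snd_add, Prod.smul_fst, Prod.smul_snd, smul_eq_mul] <;>
          rw [hc] <;> field_simp
      · linear_combination -h1 - u * h3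
      · linear_combination -h2 - u * h4
    have hmem : a ∈ convexHull ℝ ((V : Set Pt) \ {a}) := by
      apply (convex_convexHull ℝ ((V : Set Pt) \ {a})).segment_subset hy hbmem
      refine ⟨c⁻¹ * (u * ν), c⁻¹ * w, by positivity, by positivity, ?_, haeq.symm⟩
      have hsum : u * ν + w = c := by nlinarith
      rw [← mul_add, hsum, inv_mul_cancel₀ (ne_of_gt hcpos)]
    exact hconv a ha hmem

lemma mem_segment_of_collinear {V : Finset Pt} {a b x : Pt}
    (hconv : ConvexPos V) (ha : a ∈ V) (hb : b ∈ V) (hab : a ≠ b)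
    (hx : x ∈ convexHull ℝ (V : Set Pt))
    (hcol : Collinear ℝ ({a, b, x} : Set Pt)) : x ∈ segment ℝ a b := by
  rcases hcol.wbtw_or_wbtw_or_wbtw with h | h | h
  · have : x = b := eq_of_wbtw_extreme hconv hb ha hab hx h.symm
    rw [this]; exact right_mem_segment ℝ a b
  · rw [segment_symm]
    exact mem_segment_iff_wbtw.mpr h
  · have : x = a := eq_of_wbtw_extreme hconv ha hb (Ne.symm hab) hx h
    rw [this]; exact left_mem_segment ℝ a b

lemma cross_std (n : ℕ) (hn : 3 ≤ n) (v : ℕ → Pt)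
    (hinj : ∀ i < n, ∀ j < n, v i = v j → i = j)
    (hgp : GenPos ((Finset.range n).image v))
    (hconv : ConvexPos ((Finset.range n).image v))
    (horder : ∀ i < n,
      OnHullFrontier ((Finset.range n).image v) (v i) (v ((i + 1) % n)))
    (k b m : ℕ) (h1 : 0 < k) (h2 : k < b) (h3 : b < m) (h4 : m < n) :
    SegCross (v 0) (v b) (v k) (v m) := by
  obtain ⟨s, hs0, hs⟩ := triple_orient n hn v hinj hgp horder
  have hmem : ∀ i, i < n → v i ∈ (Finset.range n).image v := fun i hi =>
    Finset.mem_image.mpr ⟨i, Finset.mem_range.mpr hi, rfl⟩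
  set P := D3 (v 0) (v b) (v k) with hP
  set Q := D3 (v 0) (v b) (v m) with hQ
  have hA : 0 < s * Q := hs 0 b m (by omega) h3 h4
  have hB : 0 < s * (-P) := by
    have := hs 0 k b h1 h2 (by omega)
    rw [hP, D3_swap]
    simpa using this
  set A := s * Q with hA'
  set B := s * (-P) with hB'
  set t : ℝ := B / (A + B) with ht
  have hAB : 0 < A + B := by linarith
  have ht0 : 0 < t := div_pos hB hAB
  have ht1 : t < 1 := by rw [div_lt_one hAB]; linarith
  set x : Pt := (1 - t) • v k + t • v m with hx
  have hxseg1 : x ∈ segment ℝ (v k) (v m) :=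
    ⟨1 - t, t, by linarith, le_of_lt ht0, by ring, rfl⟩
  have hgx : D3 (v 0) (v b) x = (1 - t) * P + t * Q := by
    rw [hx, hP, hQ]
    simp only [D3_def, Prod.fst_add, Prod.snd_add, Prod.smul_fst, Prod.smul_snd, smul_eq_mul]
    ring
  have hgx0 : D3 (v 0) (v b) x = 0 := by
    have hsx : s * D3 (v 0) (v b) x = 0 := by
      rw [hgx]
      have : s * ((1 - t) * P + t * Q) = -((1 - t) * B) + t * A := by
        rw [hA', hB']; ring
      rw [this, ht]
      field_simp
      ring
    rcases mul_eq_zero.mp hsx with h | h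
    · exact absurd h hs0
    · exact h
  have hxk : x ≠ v k := by
    intro h
    rw [h] at hgx0
    rw [← hP] at hgx0
    rw [hgx0] at hB'
    simp [hB'] at hB
  have hxm : x ≠ v m := by
    intro h
    rw [h] at hgx0
    rw [← hQ] at hgx0
    rw [hgx0] at hA'
    simp [hA'] at hA
  have hxhull : x ∈ convexHull ℝ (((Finset.range n).image v : Finset Pt) : Set Pt) :=
    segment_subset_convexHull (hmem k (by omega)) (hmem m h4) hxseg1
  have h0b : v 0 ≠ v b := fun h => by
    have := hinj 0 (by omega) b (by omega) h; omega
  have hxseg2 : x ∈ segment ℝ (v 0) (v b) :=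
    mem_segment_of_collinear hconv (hmem 0 (by omega)) (hmem b (by omega)) h0b hxhull
      (collinear_of_D3 hgx0)
  exact ⟨x, hxseg2, hxseg1, by rintro ⟨_, h | h⟩ <;> [exact hxk h; exact hxm h]⟩

lemma add_mod_inj {n r i j : ℕ} (hi : i < n) (hj : j < n)
    (h : (r + i) % n = (r + j) % n) : i = j := by
  have h2 : i ≡ j [MOD n] := Nat.ModEq.add_left_cancel' r h
  have h3 : i % n = j % n := h2
  rwa [Nat.mod_eq_of_lt hi, Nat.mod_eq_of_lt hj] at h3

lemma rot_image (n : ℕ) (hn : 0 < n) (v : ℕ → Pt) (r : ℕ) :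
    (Finset.range n).image (fun x => v ((r + x) % n)) = (Finset.range n).image v := by
  apply Finset.Subset.antisymm
  · intro y hy
    rcases Finset.mem_image.mp hy with ⟨x, hx, rfl⟩
    exact Finset.mem_image.mpr ⟨(r + x) % n, Finset.mem_range.mpr (Nat.mod_lt _ hn), rfl⟩
  · intro y hy
    rcases Finset.mem_image.mp hy with ⟨t, ht, rfl⟩
    rw [Finset.mem_range] at ht
    refine Finset.mem_image.mpr ⟨(t + (n - r % n)) % n, Finset.mem_range.mpr (Nat.mod_lt _ hn), ?_⟩
    congr 1
    rw [Nat.add_mod_mod]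
    have hle : r % n < n := Nat.mod_lt _ hn
    have hdiv := Nat.mod_add_div r n
    have heq : r + (t + (n - r % n)) = t + (r / n) * n + n := by
      have h8 : n * (r / n) = (r / n) * n := Nat.mul_comm _ _
      omega
    rw [heq, Nat.add_mod_right, Nat.add_mul_mod_self_right]
    exact Nat.mod_eq_of_lt ht

lemma cross_rot (n : ℕ) (hn : 3 ≤ n) (v : ℕ → Pt)
    (hinj : ∀ i < n, ∀ j < n, v i = v j → i = j)
    (hgp : GenPos ((Finset.range n).image v))
    (hconv : ConvexPos ((Finset.range n).image v))
    (horder : ∀ i < n,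
      OnHullFrontier ((Finset.range n).image v) (v i) (v ((i + 1) % n)))
    (r k b m : ℕ) (hr : r < n) (h1 : 0 < k) (h2 : k < b) (h3 : b < m) (h4 : m < n) :
    SegCross (v r) (v ((r + b) % n)) (v ((r + k) % n)) (v ((r + m) % n)) := by
  have hn0 : 0 < n := by omega
  set v' : ℕ → Pt := fun x => v ((r + x) % n) with hv'
  have him := rot_image n hn0 v r
  have hinj' : ∀ i < n, ∀ j < n, v' i = v' j → i = j := by
    intro i hi j hj h
    have h2 := hinj ((r + i) % n) (Nat.mod_lt _ hn0) ((r + j) % n) (Nat.mod_lt _ hn0) h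
    exact add_mod_inj hi hj h2
  have horder' : ∀ i < n, OnHullFrontier ((Finset.range n).image v') (v' i) (v' ((i + 1) % n)) := by
    intro i hi
    rw [him]
    have hidx : (r + (i + 1) % n) % n = ((r + i) % n + 1) % n := by
      rw [Nat.add_mod_mod, Nat.mod_add_mod, Nat.add_assoc]
    have := horder ((r + i) % n) (Nat.mod_lt _ hn0)
    simp only [hv']
    rw [hidx]
    exact this
  have h := cross_std n hn v' hinj' (by rw [him]; exact hgp) (by rw [him]; exact hconv)
    horder' k b m h1 h2 h3 h4
  simp only [hv'] at h
  rwa [Nat.add_zero, Nat.mod_eq_of_lt hr] at h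

lemma sym2_form {f : Sym2 Pt} {a b : Pt} (hx : a ∈ f) (hy : b ∈ f) (hne : a ≠ b) :
    f = s(a, b) := by
  induction f with
  | _ p q =>
    rcases Sym2.mem_iff.mp hx with rfl | rfl <;> rcases Sym2.mem_iff.mp hy with rfl | rfl
    · exact absurd rfl hne
    · rfl
    · exact Sym2.eq_swap
    · exact absurd rfl hne

section Comb

variable (n : ℕ) (v : ℕ → Pt) (H : Finset (Sym2 Pt))

-- the geometric crossing input
variable (hn : 4 ≤ n)
  (hinj : ∀ i < n, ∀ j < n, v i = v j → i = j)
  (hcrossg : ∀ r k b m : ℕ, r < n → 0 < k → k < b → b < m → m < n →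
      SegCross (v r) (v ((r + b) % n)) (v ((r + k) % n)) (v ((r + m) % n)))
  (hchord : ∀ e ∈ H, ∃ i < n, ∃ j < n, i ≠ j ∧
      (i + 1) % n ≠ j ∧ (j + 1) % n ≠ i ∧ e = s(v i, v j))
  (hcross : ∀ e ∈ H, ∀ f ∈ H, e ≠ f → ¬ EdgeCross e f)

include hn hinj hcrossg hcross in
lemma chords_cross_contra {e f : Sym2 Pt} (he : e ∈ H) (hf : f ∈ H)
    (r k b m : ℕ) (hr : r < n) (h1 : 0 < k) (h2 : k < b) (h3 : b < m) (h4 : m < n)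
    (hee : e = s(v r, v ((r + b) % n))) (hff : f = s(v ((r + k) % n), v ((r + m) % n))) :
    False := by
  have hn0 : 0 < n := by omega
  have hr0 : r = (r + 0) % n := by rw [Nat.add_zero, Nat.mod_eq_of_lt hr]
  have hne : e ≠ f := by
    intro heq
    have hmem : v ((r + k) % n) ∈ e := by rw [heq, hff]; exact Sym2.mem_mk_left _ _
    rw [hee] at hmem
    rcases Sym2.mem_iff.mp hmem with h | h
    · have h5 : (r + k) % n = r := hinj _ (Nat.mod_lt _ hn0) r hr h
      have h6 : (r + k) % n = (r + 0) % n := by rw [Nat.add_zero, Nat.mod_eq_of_lt hr]; exact h5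
      have := add_mod_inj (by omega) (by omega) h6
      omega
    · have : (r + k) % n = (r + b) % n := hinj _ (Nat.mod_lt _ hn0) _ (Nat.mod_lt _ hn0) h
      have := add_mod_inj (by omega) (by omega) this
      omega
  exact hcross e he f hf hne
    ⟨v r, v ((r + b) % n), v ((r + k) % n), v ((r + m) % n), hee, hff,
      hcrossg r k b m hr h1 h2 h3 h4⟩

include hn hinj hcrossg hchord hcross in
lemma arc_lemma : ∀ L st, 2 ≤ L → L ≤ n - 2 → st < n →
    (∀ e ∈ H, ∀ t, 0 < t → t < L → v ((st + t) % n) ∈ e →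
      ∀ x ∈ e, ∃ u, u ≤ L ∧ x = v ((st + u) % n)) →
    ∃ t, 0 < t ∧ t < L ∧ ∀ e ∈ H, v ((st + t) % n) ∉ e := by
  have hn0 : 0 < n := by omega
  intro L
  induction L using Nat.strong_induction_on with
  | _ L ih =>
    intro st hL2 hLn hst hcl
    by_cases hinc : ∃ e ∈ H, ∃ t, 0 < t ∧ t < L ∧ v ((st + t) % n) ∈ e
    · obtain ⟨e, he, t, ht0, htL, htm⟩ := hinc
      obtain ⟨i₀, hi₀, j₀, hj₀, hij, hcons1, hcons2, hef⟩ := hchord e he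
      obtain ⟨u1, hu1L, hx1⟩ := hcl e he t ht0 htL htm (v i₀)
        (by rw [hef]; exact Sym2.mem_mk_left _ _)
      obtain ⟨u2, hu2L, hx2⟩ := hcl e he t ht0 htL htm (v j₀)
        (by rw [hef]; exact Sym2.mem_mk_right _ _)
      have hu1n : u1 < n := by omega
      have hu2n : u2 < n := by omega
      have hidx1 : i₀ = (st + u1) % n := hinj i₀ hi₀ _ (Nat.mod_lt _ hn0) hx1
      have hidx2 : j₀ = (st + u2) % n := hinj j₀ hj₀ _ (Nat.mod_lt _ hn0) hx2
      have hu12 : u1 ≠ u2 := fun h => hij (by rw [hidx1, hidx2, h])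
      have htu : t = u1 ∨ t = u2 := by
        rw [hef] at htm
        rcases Sym2.mem_iff.mp htm with h | h
        · left
          have : (st + t) % n = (st + u1) % n := by
            rw [← hidx1]; exact hinj _ (Nat.mod_lt _ hn0) i₀ hi₀ h
          exact add_mod_inj (by omega) hu1n this
        · right
          have : (st + t) % n = (st + u2) % n := by
            rw [← hidx2]; exact hinj _ (Nat.mod_lt _ hn0) j₀ hj₀ h
          exact add_mod_inj (by omega) hu2n this
      set p := min u1 u2 with hpdef
      set q := max u1 u2 with hqdef
      have hpq : p < q := by rcases le_or_gt u1 u2 with h | h <;> simp [hpdef, hqdef] <;> omega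
      have hqL : q ≤ L := by simp [hqdef]; omega
      have heform : e = s(v ((st + p) % n), v ((st + q) % n)) := by
        rcases le_or_gt u1 u2 with h | h
        · rw [hef, hidx1, hidx2, hpdef, hqdef, min_eq_left h, max_eq_right h]
        · rw [hef, hidx1, hidx2, hpdef, hqdef, min_eq_right (le_of_lt h),
            max_eq_left (le_of_lt h)]
          exact Sym2.eq_swap
      have hsplit : (p = u1 ∧ q = u2) ∨ (p = u2 ∧ q = u1) := by
        rcases le_or_gt u1 u2 with h | h
        · exact Or.inl ⟨min_eq_left h, max_eq_right h⟩
        · exact Or.inr ⟨min_eq_right (le_of_lt h), max_eq_left (le_of_lt h)⟩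
      have hnotend : ¬ (p = 0 ∧ q = L) := by
        rintro ⟨hp0, hqL'⟩
        rcases htu with h | h <;> rcases hsplit with ⟨h1', h2'⟩ | ⟨h1', h2'⟩ <;> omega
      have hq2 : p + 2 ≤ q := by
        by_contra hq2
        have hqp1 : q = p + 1 := by omega
        rcases hsplit with ⟨hp, hq⟩ | ⟨hp, hq⟩
        · apply hcons1
          rw [hidx1, hidx2, Nat.mod_add_mod]
          congr 1
          omega
        · apply hcons2
          rw [hidx1, hidx2, Nat.mod_add_mod]
          congr 1
          omega
      have hrew : ∀ z, ((st + p) % n + z) % n = (st + (p + z)) % n := fun z => by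
        rw [Nat.mod_add_mod, Nat.add_assoc]
      -- sub-arc closure
      have hcl' : ∀ f ∈ H, ∀ t', 0 < t' → t' < q - p → v (((st + p) % n + t') % n) ∈ f →
          ∀ x ∈ f, ∃ u', u' ≤ q - p ∧ x = v (((st + p) % n + u') % n) := by
        intro f hf t' ht'0 ht'q hint x hx
        rw [hrew t'] at hint
        obtain ⟨u, huL, hxu⟩ := hcl f hf (p + t') (by omega) (by omega) hint x hx
        by_cases hu_in : p ≤ u ∧ u ≤ q
        · refine ⟨u - p, by omega, ?_⟩
          rw [hrew, show p + (u - p) = u by omega]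
          exact hxu
        · exfalso
          have hun : u < n := by omega
          have hwn : p + t' < n := by omega
          have huw : u ≠ p + t' := by omega
          have hne_pts : v ((st + (p + t')) % n) ≠ v ((st + u) % n) := by
            intro hh
            have := hinj _ (Nat.mod_lt _ hn0) _ (Nat.mod_lt _ hn0) hh
            exact huw (add_mod_inj hwn hun this).symm
          have hfform : f = s(v ((st + (p + t')) % n), v ((st + u) % n)) :=
            sym2_form hint (by rw [← hxu]; exact hx) hne_pts
          rcases Nat.lt_or_ge u p with hu | hu
          · -- u < p < p+t' < q : f is outer chord from base u
            apply chords_cross_contra n v H hn hinj hcrossg hcross hf he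
              ((st + u) % n) (p - u) (p + t' - u) (q - u)
              (Nat.mod_lt _ hn0) (by omega) (by omega) (by omega) (by omega)
            · rw [hfform]
              have h1 : ((st + u) % n + (p + t' - u)) % n = (st + (p + t')) % n := by
                rw [Nat.mod_add_mod]; congr 1; omega
              rw [h1]
              exact Sym2.eq_swap
            · rw [heform]
              have h1 : ((st + u) % n + (p - u)) % n = (st + p) % n := by
                rw [Nat.mod_add_mod]; congr 1; omega
              have h2 : ((st + u) % n + (q - u)) % n = (st + q) % n := by
                rw [Nat.mod_add_mod]; congr 1; omega
              rw [h1, h2]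
          · -- q < u : e outer from base p, f inner (p+t', u)
            have hqu : q < u := by omega
            apply chords_cross_contra n v H hn hinj hcrossg hcross he hf
              ((st + p) % n) (t') (q - p) (u - p)
              (Nat.mod_lt _ hn0) (by omega) (by omega) (by omega) (by omega)
            · rw [heform]
              have h2 : ((st + p) % n + (q - p)) % n = (st + q) % n := by
                rw [Nat.mod_add_mod]; congr 1; omega
              rw [h2]
            · rw [hfform]
              have h1 : ((st + p) % n + t') % n = (st + (p + t')) % n := hrew t'
              have h2 : ((st + p) % n + (u - p)) % n = (st + u) % n := by
                rw [Nat.mod_add_mod]; congr 1; omega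
              rw [h1, h2]
      obtain ⟨t'', ht''0, ht''q, ht''⟩ := ih (q - p) (by omega) ((st + p) % n)
        (by omega) (by omega) (Nat.mod_lt _ hn0) hcl'
      refine ⟨p + t'', by omega, by omega, fun e' he' => ?_⟩
      have := ht'' e' he'
      rwa [hrew] at this
    · push_neg at hinc
      exact ⟨1, by omega, by omega, fun e he hmem => hinc e he 1 (by omega) (by omega) hmem⟩

end Comb

end Stmt8Aux

open Stmt8Aux

/-- Let `v 0, …, v (n-1)` with `n ≥ 4` be points in the plane in convex
position and in general position (no three collinear), listed in convex-position order (each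
segment between cyclically consecutive points lies on the boundary of the convex hull), and
let `H` be a set of pairwise non-crossing chords of the convex polygon (segments `v i v j`
between two vertices that are not consecutive in the cyclic order).  Then there exist two
vertices `v i` and `v j` that are not consecutive in the cyclic order and are incident to no
chord of `H`. -/
theorem exists_two_nonconsecutive_unused_vertices
    (n : ℕ) (hn : 4 ≤ n) (v : ℕ → Pt)
    (hinj : ∀ i < n, ∀ j < n, v i = v j → i = j)
    (hgp : GenPos ((Finset.range n).image v))
    (hconv : ConvexPos ((Finset.range n).image v))
    (horder : ∀ i < n,
      OnHullFrontier ((Finset.range n).image v) (v i) (v ((i + 1) % n)))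
    (H : Finset (Sym2 Pt))
    (hchord : ∀ e ∈ H, ∃ i < n, ∃ j < n, i ≠ j ∧
      (i + 1) % n ≠ j ∧ (j + 1) % n ≠ i ∧ e = s(v i, v j))
    (hcross : ∀ e ∈ H, ∀ f ∈ H, e ≠ f → ¬ EdgeCross e f) :
    ∃ i < n, ∃ j < n, i ≠ j ∧ (i + 1) % n ≠ j ∧ (j + 1) % n ≠ i ∧
      ∀ e ∈ H, v i ∉ e ∧ v j ∉ e := by
  have hn0 : 0 < n := by omega
  have hcrossg : ∀ r k b m : ℕ, r < n → 0 < k → k < b → b < m → m < n →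
      SegCross (v r) (v ((r + b) % n)) (v ((r + k) % n)) (v ((r + m) % n)) :=
    fun r k b m hr h1 h2 h3 h4 =>
      cross_rot n (by omega) v hinj hgp hconv horder r k b m hr h1 h2 h3 h4
  -- cyclic offset existence
  have hoff : ∀ r m : ℕ, r < n → m < n → ∃ u, u < n ∧ (r + u) % n = m := by
    intro r m hr hm
    rcases le_or_gt r m with h | h
    · exact ⟨m - r, by omega, by rw [show r + (m - r) = m by omega]; exact Nat.mod_eq_of_lt hm⟩
    · refine ⟨m + n - r, by omega, ?_⟩
      rw [show r + (m + n - r) = m + n by omega, Nat.add_mod_right]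
      exact Nat.mod_eq_of_lt hm
  rcases Finset.eq_empty_or_nonempty H with hHe | ⟨e₀, he₀⟩
  · refine ⟨0, by omega, 2, by omega, by omega, ?_, ?_, fun e he => absurd he (by simp [hHe])⟩
    · rw [Nat.mod_eq_of_lt (by omega)]; omega
    · rw [Nat.mod_eq_of_lt (by omega)]; omega
  · obtain ⟨i₀, hi₀, j₀, hj₀, hij, hc1, hc2, hef⟩ := hchord e₀ he₀
    set d := if i₀ < j₀ then j₀ - i₀ else j₀ + n - i₀ with hd
    have hd0 : 0 < d ∧ d < n := by rw [hd]; split_ifs <;> omega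
    have hdj : (i₀ + d) % n = j₀ := by
      rw [hd]; split_ifs with h
      · rw [show i₀ + (j₀ - i₀) = j₀ by omega]; exact Nat.mod_eq_of_lt hj₀
      · rw [show i₀ + (j₀ + n - i₀) = j₀ + n by omega, Nat.add_mod_right]
        exact Nat.mod_eq_of_lt hj₀
    have hd2 : 2 ≤ d := by
      by_contra h'
      have hd1 : d = 1 := by omega
      exact hc1 (by rw [← hdj, hd1])
    have hdn2 : d ≤ n - 2 := by
      by_contra h'
      have hd1 : d = n - 1 := by omega
      apply hc2
      rw [← hdj, Nat.mod_add_mod, show i₀ + d + 1 = i₀ + n by omega, Nat.add_mod_right]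
      exact Nat.mod_eq_of_lt hi₀
    have heform : e₀ = s(v i₀, v ((i₀ + d) % n)) := by rw [hef, hdj]
    have hi₀eq : (i₀ + 0) % n = i₀ := by rw [Nat.add_zero]; exact Nat.mod_eq_of_lt hi₀
    have heform0 : e₀ = s(v ((i₀ + 0) % n), v ((i₀ + d) % n)) := by rw [hi₀eq]; exact heform
    -- point distinctness helper (base i₀)
    have hptne : ∀ a b : ℕ, a < n → b < n → a ≠ b → v ((i₀ + a) % n) ≠ v ((i₀ + b) % n) := by
      intro a b ha hb hab hh
      exact hab (add_mod_inj ha hb (hinj _ (Nat.mod_lt _ hn0) _ (Nat.mod_lt _ hn0) hh))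
    -- arc 1 : base i₀, length d
    have harc1 : ∀ f ∈ H, ∀ t, 0 < t → t < d → v ((i₀ + t) % n) ∈ f →
        ∀ x ∈ f, ∃ u, u ≤ d ∧ x = v ((i₀ + u) % n) := by
      intro f hf t ht0 htd hint x hx
      obtain ⟨i₁, hi₁, j₁, hj₁, _, _, _, hff⟩ := hchord f hf
      have hxi : ∃ mx, mx < n ∧ x = v mx := by
        rw [hff] at hx
        rcases Sym2.mem_iff.mp hx with h | h
        · exact ⟨i₁, hi₁, h⟩
        · exact ⟨j₁, hj₁, h⟩
      obtain ⟨mx, hmx, hxe⟩ := hxi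
      obtain ⟨u, hun, huq⟩ := hoff i₀ mx hi₀ hmx
      by_cases hud : u ≤ d
      · exact ⟨u, hud, by rw [hxe, ← huq]⟩
      · exfalso
        push_neg at hud
        have htu : t ≠ u := by omega
        have hfform : f = s(v ((i₀ + t) % n), v ((i₀ + u) % n)) :=
          sym2_form hint (by rw [huq, ← hxe]; exact hx) (hptne t u (by omega) hun htu)
        exact chords_cross_contra n v H hn hinj hcrossg hcross he₀ hf
          i₀ t d u hi₀ ht0 htd hud hun heform hfform
    -- arc 2 : base j₀, length n - d
    have hrew2 : ∀ z, (j₀ + z) % n = (i₀ + (d + z)) % n := by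
      intro z
      rw [← hdj, Nat.mod_add_mod, Nat.add_assoc]
    have harc2 : ∀ f ∈ H, ∀ t, 0 < t → t < n - d → v ((j₀ + t) % n) ∈ f →
        ∀ x ∈ f, ∃ u, u ≤ n - d ∧ x = v ((j₀ + u) % n) := by
      intro f hf t ht0 htd hint x hx
      obtain ⟨i₁, hi₁, j₁, hj₁, _, _, _, hff⟩ := hchord f hf
      have hxi : ∃ mx, mx < n ∧ x = v mx := by
        rw [hff] at hx
        rcases Sym2.mem_iff.mp hx with h | h
        · exact ⟨i₁, hi₁, h⟩
        · exact ⟨j₁, hj₁, h⟩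
      obtain ⟨mx, hmx, hxe⟩ := hxi
      obtain ⟨u, hun, huq⟩ := hoff j₀ mx hj₀ hmx
      by_cases hud : u ≤ n - d
      · exact ⟨u, hud, by rw [hxe, ← huq]⟩
      · exfalso
        push_neg at hud
        -- positions from i₀ : x at d + u - n ∈ (0, d), interior at d + t ∈ (d, n)
        have hxpos : (j₀ + u) % n = (i₀ + (d + u - n)) % n := by
          rw [hrew2, show i₀ + (d + u) = i₀ + (d + u - n) + n by omega, Nat.add_mod_right]
        rw [hrew2 t] at hint
        have hne12 : v ((i₀ + (d + u - n)) % n) ≠ v ((i₀ + (d + t)) % n) :=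
          hptne _ _ (by omega) (by omega) (by omega)
        have hfform : f = s(v ((i₀ + (d + u - n)) % n), v ((i₀ + (d + t)) % n)) :=
          sym2_form (by rw [← hxpos, huq, ← hxe]; exact hx) hint hne12
        exact chords_cross_contra n v H hn hinj hcrossg hcross he₀ hf
          i₀ (d + u - n) d (d + t) hi₀ (by omega) (by omega) (by omega) (by omega)
          heform hfform
    obtain ⟨t1, ht10, ht1d, ht1⟩ :=
      arc_lemma n v H hn hinj hcrossg hchord hcross d i₀ hd2 hdn2 hi₀ harc1
    obtain ⟨t2, ht20, ht2d, ht2⟩ :=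
      arc_lemma n v H hn hinj hcrossg hchord hcross (n - d) j₀ (by omega) (by omega) hj₀ harc2
    set A := t1 with hA
    set B := d + t2 with hB
    have hk2eq : (j₀ + t2) % n = (i₀ + B) % n := hrew2 t2
    have hAB : 0 < A ∧ A < d ∧ d < B ∧ B < n := by refine ⟨ht10, ht1d, by omega, by omega⟩
    refine ⟨(i₀ + A) % n, Nat.mod_lt _ hn0, (j₀ + t2) % n, Nat.mod_lt _ hn0, ?_, ?_, ?_,
      fun e he => ⟨ht1 e he, ht2 e he⟩⟩
    · rw [hk2eq]
      intro hh
      have := add_mod_inj (by omega) (by omega) hh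
      omega
    · rw [hk2eq, Nat.mod_add_mod, Nat.add_assoc]
      intro hh
      have := add_mod_inj (by omega : A + 1 < n) (by omega) hh
      omega
    · rw [hk2eq, Nat.mod_add_mod, Nat.add_assoc]
      rcases Nat.lt_or_ge (B + 1) n with hBn | hBn
      · intro hh
        have := add_mod_inj hBn (by omega) hh
        omega
      · have hBn' : B + 1 = n := by omega
        rw [hBn', Nat.add_mod_right]
        intro hh
        rw [← hi₀eq] at hh
        have := add_mod_inj hn0 (by omega) hh
        omega
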